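/- For all positive integers k and t, M_2(k+t, k) ≥ ⌊k/(t+1)⌋^{t+1}. -/

import Mathlib

open Finset

/-- The support of a vector `x ∈ F_2^n`: the set of nonzero coordinates. -/
def supp {n : ℕ} (x : Fin n → ZMod 2) : Set (Fin n) := {i | x i ≠ 0}

/-- `c` is a minimal codeword of the linear code (subspace) `C ≤ F_2^n`:
it is a nonzero codeword and no nonzero codeword has support properly contained in `supp c`. -/
def IsMinimal {n : ℕ} (C : Submodule (ZMod 2) (Fin n → ZMod 2)) (c : Fin n → ZMod 2) : Prop :=
  c ∈ C ∧ c ≠ 0 ∧ ∀ c' ∈ C, c' ≠ 0 → ¬ supp c' ⊂ supp c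

/-- `M(C)`: the number of minimal codewords of `C`. -/
noncomputable def Mcode {n : ℕ} (C : Submodule (ZMod 2) (Fin n → ZMod 2)) : ℕ :=
  Set.ncard {c | IsMinimal C c}

/-- The `i`-th row `g^i` of the systematic generator matrix `G = [I_k | A]`. -/
def row {k t : ℕ} (A : Fin k → Fin t → ZMod 2) (i : Fin k) : Fin (k + t) → ZMod 2 :=
  Fin.append (Pi.single i 1) (A i)

/-- The binary linear `[k+t, k]` code with systematic generator matrix `G = [I_k | A]`. -/
def genCode {k t : ℕ} (A : Fin k → Fin t → ZMod 2) :
    Submodule (ZMod 2) (Fin (k + t) → ZMod 2) :=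
  Submodule.span (ZMod 2) (Set.range (row A))

/-- `c^S = ∑_{i ∈ S} g^i`. -/
def cS {k t : ℕ} (A : Fin k → Fin t → ZMod 2) (S : Finset (Fin k)) : Fin (k + t) → ZMod 2 :=
  ∑ i ∈ S, row A i

/-- `c_I`: the restriction of a codeword to its last `t` coordinates (the information bits). -/
def infoBits {k t : ℕ} (c : Fin (k + t) → ZMod 2) : Fin t → ZMod 2 :=
  fun j => c (Fin.natAdd k j)

/-- `a_τ(A)` : the number of indices `i` with `g^i_I = A i = τ`. -/
def aCount {k t : ℕ} (A : Fin k → Fin t → ZMod 2) (τ : Fin t → ZMod 2) : ℕ :=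
  (Finset.univ.filter fun i => A i = τ).card

/-- `M_2(n, k)`: the maximum of `M(C)` over all binary linear `[n, k]` codes `C`. -/
noncomputable def M2 (n k : ℕ) : ℕ :=
  sSup {m | ∃ C : Submodule (ZMod 2) (Fin n → ZMod 2),
    Module.finrank (ZMod 2) C = k ∧ Mcode C = m}


section Helpers

variable {k t : ℕ}

lemma zmod2_cases : ∀ a : ZMod 2, a ≠ 1 → a = 0 := by decide

lemma cS_castAdd (A : Fin k → Fin t → ZMod 2) (S : Finset (Fin k)) (i : Fin k) :
    cS A S (Fin.castAdd t i) = if i ∈ S then 1 else 0 := by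
  classical
  unfold cS row
  rw [Finset.sum_apply]
  simp only [Fin.append_left, Pi.single_apply]
  exact Finset.sum_ite_eq S i fun _ => (1 : ZMod 2)

lemma cS_natAdd (A : Fin k → Fin t → ZMod 2) (S : Finset (Fin k)) (j : Fin t) :
    cS A S (Fin.natAdd k j) = ∑ i ∈ S, A i j := by
  unfold cS row
  rw [Finset.sum_apply]
  simp only [Fin.append_right]

lemma cS_mem (A : Fin k → Fin t → ZMod 2) (S : Finset (Fin k)) : cS A S ∈ genCode A :=
  Submodule.sum_mem _ fun i _ => Submodule.subset_span ⟨i, rfl⟩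

lemma cS_empty (A : Fin k → Fin t → ZMod 2) : cS A (∅ : Finset (Fin k)) = 0 :=
  Finset.sum_empty

lemma mem_genCode (A : Fin k → Fin t → ZMod 2) (c : Fin (k+t) → ZMod 2) :
    c ∈ genCode A ↔ ∃ S : Finset (Fin k), c = cS A S := by
  classical
  constructor
  · intro hc
    obtain ⟨f, hf⟩ := (Submodule.mem_span_range_iff_exists_fun (ZMod 2)).mp hc
    refine ⟨Finset.univ.filter fun i => f i = 1, ?_⟩
    rw [← hf]
    unfold cS
    rw [← Finset.sum_filter_add_sum_filter_not Finset.univ (fun i => f i = 1)]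
    have h2 : ∑ i ∈ Finset.univ.filter (fun i => ¬ f i = 1), f i • row A i = 0 := by
      apply Finset.sum_eq_zero
      intro i hi
      rw [zmod2_cases _ (Finset.mem_filter.mp hi).2, zero_smul]
    rw [h2, add_zero]
    exact Finset.sum_congr rfl fun i hi => by
      rw [(Finset.mem_filter.mp hi).2, one_smul]
  · rintro ⟨S, rfl⟩; exact cS_mem A S

end Helpers


/-- Column types: `tau t 0` is all-ones, `tau t (x+1)` is the `x`-th unit vector. -/
def tauV (t : ℕ) (j : ℕ) : Fin t → ZMod 2 :=
  fun x => if j = 0 ∨ j = x.val + 1 then 1 else 0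

lemma sum_tauV_apply {t : ℕ} (T : Finset (Fin (t+1))) (x : Fin t) :
    (∑ j ∈ T, tauV t j.val) x =
      (if (0 : Fin (t+1)) ∈ T then 1 else 0) +
        (if (⟨x.val + 1, by omega⟩ : Fin (t+1)) ∈ T then 1 else 0) := by
  classical
  rw [Finset.sum_apply]
  have hsplit : ∀ j ∈ T, tauV t j.val x =
      (if j = (0 : Fin (t+1)) then (1 : ZMod 2) else 0) +
        (if j = (⟨x.val + 1, by omega⟩ : Fin (t+1)) then (1 : ZMod 2) else 0) := by
    intro j _
    unfold tauV
    by_cases h0 : j.val = 0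
    · have h1 : ¬ j.val = x.val + 1 := by omega
      simp [h0, h1, Fin.ext_iff]
    · by_cases h1 : j.val = x.val + 1 <;> simp [h0, h1, Fin.ext_iff]
  rw [Finset.sum_congr rfl hsplit, Finset.sum_add_distrib,
    Finset.sum_ite_eq' T (0 : Fin (t+1)) (fun _ => (1 : ZMod 2)),
    Finset.sum_ite_eq' T (⟨x.val + 1, by omega⟩ : Fin (t+1)) (fun _ => (1 : ZMod 2))]

lemma sum_tauV_univ (t : ℕ) : ∑ j : Fin (t+1), tauV t j.val = 0 := by
  funext x
  rw [sum_tauV_apply Finset.univ x]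
  simp only [Finset.mem_univ, if_true, Pi.zero_apply]
  decide

lemma tauV_T_univ {t : ℕ} (T : Finset (Fin (t+1))) (hT : T.Nonempty)
    (h : ∑ j ∈ T, tauV t j.val = 0) : T = Finset.univ := by
  have key : ∀ x : Fin t,
      ((0 : Fin (t+1)) ∈ T ↔ (⟨x.val + 1, by omega⟩ : Fin (t+1)) ∈ T) := by
    intro x
    have hx := congrFun h x
    rw [sum_tauV_apply T x] at hx
    by_cases h0 : (0 : Fin (t+1)) ∈ T <;>
      by_cases h1 : (⟨x.val + 1, by omega⟩ : Fin (t+1)) ∈ T <;>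
        simp [h0, h1] at hx ⊢
  have h0T : (0 : Fin (t+1)) ∈ T := by
    obtain ⟨j, hj⟩ := hT
    by_cases hj0 : j.val = 0
    · have : j = 0 := Fin.ext (by simpa using hj0)
      rwa [this] at hj
    · have hx : j.val - 1 < t := by omega
      have hje : j = (⟨(⟨j.val - 1, hx⟩ : Fin t).val + 1, by omega⟩ : Fin (t+1)) :=
        Fin.ext (by simp; omega)
      exact (key ⟨j.val - 1, hx⟩).mpr (hje ▸ hj)
  ext j
  simp only [Finset.mem_univ, iff_true]
  by_cases hj0 : j.val = 0
  · have : j = 0 := Fin.ext (by simpa using hj0)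
    rwa [this]
  · have hx : j.val - 1 < t := by omega
    have hje : j = (⟨(⟨j.val - 1, hx⟩ : Fin t).val + 1, by omega⟩ : Fin (t+1)) :=
      Fin.ext (by simp; omega)
    rw [hje]
    exact (key ⟨j.val - 1, hx⟩).mp h0T

/-- The embedding placing the `x`-th member of group `j` at position `x + j*m`. -/
def emb {k t : ℕ} (m : ℕ) (hm : m * (t+1) ≤ k) (j : Fin (t+1)) (x : Fin m) : Fin k :=
  ⟨x.val + j.val * m, by
    have h1 : j.val * m ≤ t * m := Nat.mul_le_mul_right m (by omega)
    have h2 := x.isLt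
    have h3 : m + t * m = m * (t+1) := by ring
    omega⟩

lemma emb_div {k t : ℕ} {m : ℕ} (hmpos : 0 < m) (hm : m * (t+1) ≤ k)
    (j : Fin (t+1)) (x : Fin m) : (emb m hm j x).val / m = j.val := by
  show (x.val + j.val * m) / m = j.val
  rw [Nat.add_mul_div_right _ _ hmpos, Nat.div_eq_of_lt x.isLt, Nat.zero_add]

lemma emb_inj {k t : ℕ} {m : ℕ} (hmpos : 0 < m) (hm : m * (t+1) ≤ k)
    {j j' : Fin (t+1)} {x x' : Fin m} (h : emb m hm j x = emb m hm j' x') :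
    j = j' ∧ x = x' := by
  have hd : j.val = j'.val := by
    rw [← emb_div hmpos hm j x, ← emb_div hmpos hm j' x', h]
  have hv : x.val + j.val * m = x'.val + j'.val * m := congrArg Fin.val h
  have hm2 : j.val * m = j'.val * m := by rw [hd]
  exact ⟨Fin.ext hd, Fin.ext (by omega)⟩


theorem stmt12 (k t : ℕ) (hk : 0 < k) (ht : 0 < t) :
    (k / (t + 1)) ^ (t + 1) ≤ M2 (k + t) k := by
  classical
  set q := k / (t + 1) with hq
  rcases Nat.eq_zero_or_pos q with hq0 | hqpos
  · rw [hq0, Nat.zero_pow (by omega)]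
    exact Nat.zero_le _
  have hqk : q * (t + 1) ≤ k := Nat.div_mul_le_self k (t + 1)
  -- the generator matrix
  set A : Fin k → Fin t → ZMod 2 := fun i => tauV t (i.val / q) with hA
  have hAemb : ∀ (j : Fin (t+1)) (x : Fin q), A (emb q hqk j x) = tauV t j.val := by
    intro j x
    rw [hA]
    simp only
    rw [emb_div hqpos hqk j x]
  -- rank of the code
  have hrank : Module.finrank (ZMod 2) (genCode A) = k := by
    have hli : LinearIndependent (ZMod 2) (row A) := by
      have hcomp : (LinearMap.funLeft (ZMod 2) (ZMod 2) (Fin.castAdd t)) ∘ (row A)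
          = fun i : Fin k => Pi.single i (1 : ZMod 2) := by
        funext i i'
        simp [LinearMap.funLeft, row, Fin.append_left]
      have hstd : LinearIndependent (ZMod 2) (fun i : Fin k => Pi.single i (1 : ZMod 2)) := by
        have := (Pi.basisFun (ZMod 2) (Fin k)).linearIndependent
        convert this using 1
        funext i
        simp [Pi.basisFun_apply]
      exact LinearIndependent.of_comp _ (hcomp ▸ hstd)
    have := finrank_span_eq_card hli
    exact this.trans (Fintype.card_fin k)
  -- the family of minimal codewords
  set Smap : (Fin (t+1) → Fin q) → Finset (Fin k) :=
    fun f => Finset.univ.image (fun j => emb q hqk j (f j)) with hSmap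
  -- sum of A over Smap f is 0
  have hsumA : ∀ f : Fin (t+1) → Fin q, ∀ j' : Fin t, ∑ i ∈ Smap f, A i j' = 0 := by
    intro f j'
    rw [hSmap]
    simp only
    rw [Finset.sum_image (fun a _ b _ h => ((emb_inj hqpos hqk h).1))]
    have : ∀ j ∈ Finset.univ, A (emb q hqk j (f j)) j' = tauV t j.val j' := by
      intro j _
      rw [hAemb]
    rw [Finset.sum_congr rfl this]
    have := congrFun (sum_tauV_univ t) j'
    rw [Finset.sum_apply] at this
    exact this
  -- minimality
  have hmin : ∀ f : Fin (t+1) → Fin q, IsMinimal (genCode A) (cS A (Smap f)) := by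
    intro f
    refine ⟨cS_mem A (Smap f), ?_, ?_⟩
    · intro h0
      have h1 : emb q hqk 0 (f 0) ∈ Smap f := Finset.mem_image_of_mem _ (Finset.mem_univ 0)
      have := congrFun h0 (Fin.castAdd t (emb q hqk 0 (f 0)))
      rw [cS_castAdd, if_pos h1] at this
      exact one_ne_zero this
    · intro c' hc' hne hsub
      obtain ⟨S', rfl⟩ := (mem_genCode A c').mp hc'
      have hsubs := hsub.subset
      have hS'S : S' ⊆ Smap f := by
        intro i hi
        have hmem : Fin.castAdd t i ∈ supp (cS A S') := by
          simp only [supp, Set.mem_setOf_eq, cS_castAdd, if_pos hi]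
          exact one_ne_zero
        have := hsubs hmem
        simp only [supp, Set.mem_setOf_eq, cS_castAdd] at this
        by_contra hcon
        rw [if_neg hcon] at this
        exact this rfl
      have hinfo : ∀ j' : Fin t, ∑ i ∈ S', A i j' = 0 := by
        intro j'
        by_contra h
        have hmem : Fin.natAdd k j' ∈ supp (cS A S') := by
          simp only [supp, Set.mem_setOf_eq, cS_natAdd]
          exact h
        have := hsubs hmem
        simp only [supp, Set.mem_setOf_eq, cS_natAdd] at this
        exact this (hsumA f j')
      have hS'ne : S'.Nonempty := by
        rw [Finset.nonempty_iff_ne_empty]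
        intro h
        rw [h, cS_empty] at hne
        exact hne rfl
      set T : Finset (Fin (t+1)) := Finset.univ.filter (fun j => emb q hqk j (f j) ∈ S')
        with hT
      have hS'eq : S' = T.image (fun j => emb q hqk j (f j)) := by
        ext i
        constructor
        · intro hi
          have := hS'S hi
          rw [hSmap] at this
          simp only [Finset.mem_image, Finset.mem_univ, true_and] at this
          obtain ⟨j, hj⟩ := this
          refine Finset.mem_image.mpr ⟨j, ?_, hj⟩
          rw [hT]
          simp only [Finset.mem_filter, Finset.mem_univ, true_and]
          rwa [hj]
        · intro hi
          obtain ⟨j, hjT, hj⟩ := Finset.mem_image.mp hi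
          rw [hT] at hjT
          simp only [Finset.mem_filter, Finset.mem_univ, true_and] at hjT
          rwa [hj] at hjT
      have hTne : T.Nonempty := by
        rcases Finset.eq_empty_or_nonempty T with h | h
        · rw [h, Finset.image_empty] at hS'eq
          exact absurd hS'eq (Finset.nonempty_iff_ne_empty.mp hS'ne)
        · exact h
      have hTsum : ∑ j ∈ T, tauV t j.val = 0 := by
        funext x
        rw [Finset.sum_apply]
        have h1 := hinfo x
        rw [hS'eq, Finset.sum_image (fun a _ b _ h => ((emb_inj hqpos hqk h).1))] at h1
        have h2 : ∀ j ∈ T, A (emb q hqk j (f j)) x = tauV t j.val x := by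
          intro j _
          rw [hAemb]
        rw [Finset.sum_congr rfl h2] at h1
        exact h1
      have hTu := tauV_T_univ T hTne hTsum
      have hSS : S' = Smap f := by
        rw [hS'eq, hTu, hSmap]
      rw [hSS] at hsub
      exact hsub.ne rfl
  -- injectivity of the family
  have hFinj : Function.Injective (fun f : Fin (t+1) → Fin q => cS A (Smap f)) := by
    intro f f' h
    funext j
    have hmem : emb q hqk j (f j) ∈ Smap f' := by
      have h1 : emb q hqk j (f j) ∈ Smap f := Finset.mem_image_of_mem _ (Finset.mem_univ j)
      have := congrFun h (Fin.castAdd t (emb q hqk j (f j)))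
      simp only [cS_castAdd, if_pos h1] at this
      by_contra hcon
      rw [if_neg hcon] at this
      exact one_ne_zero this
    rw [hSmap] at hmem
    simp only [Finset.mem_image, Finset.mem_univ, true_and] at hmem
    obtain ⟨j', hj'⟩ := hmem
    obtain ⟨hjj, hxx⟩ := emb_inj hqpos hqk hj'.symm
    rw [← hjj] at hxx
    exact hxx
  -- counting
  have hcount : q ^ (t + 1) ≤ Mcode (genCode A) := by
    have hrange : Set.range (fun f : Fin (t+1) → Fin q => cS A (Smap f))
        ⊆ {c | IsMinimal (genCode A) c} := by
      rintro c ⟨f, rfl⟩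
      exact hmin f
    calc q ^ (t + 1) = Nat.card (Fin (t+1) → Fin q) := by
          simp [Nat.card_eq_fintype_card]
      _ = (Set.range (fun f : Fin (t+1) → Fin q => cS A (Smap f))).ncard := by
          rw [← Set.image_univ, Set.ncard_image_of_injective _ hFinj, Set.ncard_univ]
      _ ≤ Set.ncard {c | IsMinimal (genCode A) c} :=
          Set.ncard_le_ncard hrange (Set.toFinite _)
      _ = Mcode (genCode A) := rfl
  -- conclude via sSup
  have hbdd : BddAbove {m | ∃ C : Submodule (ZMod 2) (Fin (k+t) → ZMod 2),
      Module.finrank (ZMod 2) C = k ∧ Mcode C = m} := by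
    refine ⟨Set.ncard (Set.univ : Set (Fin (k+t) → ZMod 2)), ?_⟩
    rintro x ⟨C, _, rfl⟩
    exact Set.ncard_le_ncard (Set.subset_univ _) Set.finite_univ
  have hmem : Mcode (genCode A) ∈ {m | ∃ C : Submodule (ZMod 2) (Fin (k+t) → ZMod 2),
      Module.finrank (ZMod 2) C = k ∧ Mcode C = m} := ⟨genCode A, hrank, rfl⟩
  exact le_trans hcount (le_csSup hbdd hmem)
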